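/- Let 0 < γ < 1. (i) For all real x > −1, (1+x)^γ ≥ 1 + γx − (1−γ)x². (ii) If moreover (γ/2)^{1/(2−γ)} ≥ (1−γ)/(2−γ), then the function x ↦ (1−γ)x² + (1+x)^γ is strictly monotone increasing on (−1, ∞). -/

import Mathlib

open MeasureTheory Real Filter

noncomputable section

/-- Bernoulli's inequality for exponents in `(-1,0)`, strict version. -/
lemma neg_bern_lt {p s : ℝ} (hp0 : 0 < p) (hp1 : p < 1) (hs : -1 < s) (hs0 : s ≠ 0) :
    1 - p * s < (1 + s) ^ (-p) := by
  have h1s : (0:ℝ) < 1 + s := by linarith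
  have hb : (1 + s) ^ p < 1 + p * s := rpow_one_add_lt_one_add_mul_self hs.le hs0 hp0 hp1
  have hps : 0 < 1 + p * s := by nlinarith
  have hrp : (0:ℝ) < (1 + s) ^ p := rpow_pos_of_pos h1s p
  have hneg : (1 + s) ^ (-p) = ((1 + s) ^ p)⁻¹ := rpow_neg h1s.le p
  rw [hneg]
  have h2 : (1 + p * s)⁻¹ < ((1 + s) ^ p)⁻¹ := by gcongr
  have h3 : 1 - p * s ≤ (1 + p * s)⁻¹ := by
    rw [show (1 + p*s)⁻¹ = 1/(1+p*s) by ring, le_div_iff₀ hps]; nlinarith [sq_nonneg (p*s)]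
  linarith

/-- Bernoulli's inequality for exponents in `(-1,0)`, non-strict version. -/
lemma neg_bern_le {p s : ℝ} (hp0 : 0 < p) (hp1 : p < 1) (hs : -1 < s) :
    1 - p * s ≤ (1 + s) ^ (-p) := by
  by_cases hs0 : s = 0
  · simp [hs0]
  · exact (neg_bern_lt hp0 hp1 hs hs0).le

/-- **Lemma 3.6**: for `0 < γ < 1`, (i) `(1+x)^γ ≥ 1 + γx - (1-γ)x²` for all `x > -1`;
(ii) if `(γ/2)^{1/(2-γ)} ≥ (1-γ)/(2-γ)`, then `x ↦ (1-γ)x² + (1+x)^γ` is strictly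
increasing on `(-1, ∞)`. -/
theorem power_lower_bound_and_monotone (γ : ℝ) (hγ0 : 0 < γ) (hγ1 : γ < 1) :
    (∀ x : ℝ, -1 < x → (1 + x) ^ γ ≥ 1 + γ * x - (1 - γ) * x ^ 2) ∧
    ((γ/2) ^ (1/(2-γ)) ≥ (1-γ)/(2-γ) →
      StrictMonoOn (fun x : ℝ => (1-γ) * x ^ 2 + (1+x) ^ γ) (Set.Ioi (-1 : ℝ))) := by
  constructor
  · -- Part (i)
    intro x hx
    have ht : (0:ℝ) < 1 + x := by linarith
    have hb : 1 - (1-γ) * x ≤ (1 + x) ^ (-(1-γ)) :=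
      neg_bern_le (by linarith) (by linarith) hx
    have hsplit := rpow_add ht 1 (-(1-γ))
    rw [show (1:ℝ) + -(1-γ) = γ by ring, rpow_one] at hsplit
    have hmul : (1 + x) * (1 - (1-γ)*x) ≤ (1 + x) * (1 + x) ^ (-(1-γ)) :=
      mul_le_mul_of_nonneg_left hb ht.le
    rw [ge_iff_le, hsplit]
    nlinarith
  · -- Part (ii)
    intro hT
    set T : ℝ := (γ/2) ^ (1/(2-γ)) with hTdef
    have h2γ : (0:ℝ) < 2 - γ := by linarith
    have hγ2 : (0:ℝ) < γ/2 := by linarith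
    have hT0 : 0 < T := rpow_pos_of_pos hγ2 _
    have hK : γ * T ^ (γ-1) = 2 * T := by
      have h1 : T ^ (γ-1) = (γ/2) ^ ((1/(2-γ)) * (γ-1)) := by
        rw [hTdef, ← rpow_mul hγ2.le]
      have h2 : (1/(2-γ)) * (γ-1) = 1/(2-γ) - 1 := by field_simp; ring
      rw [h1, h2, rpow_sub hγ2, rpow_one, ← hTdef]
      field_simp
    have hkey : ∀ t : ℝ, 0 < t → t ≠ T → 0 < γ * t ^ (γ-1) + 2*(1-γ)*(t-1) := by
      intro t ht htne
      set s : ℝ := t/T - 1 with hsdef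
      have hdiv : 0 < t/T := div_pos ht hT0
      have hs : -1 < s := by rw [hsdef]; linarith
      have hs0 : s ≠ 0 := by
        rw [hsdef]
        intro h
        apply htne
        have : t/T = 1 := by linarith
        field_simp at this
        linarith
      have hbern : 1 - (1-γ)*s < (1+s)^(-(1-γ)) :=
        neg_bern_lt (by linarith) (by linarith) hs hs0
      have hts : t = T * (1+s) := by rw [hsdef]; field_simp; ring
      have hpow : t ^ (γ-1) = T^(γ-1) * (1+s)^(γ-1) := by
        rw [hts, mul_rpow hT0.le (by linarith : (0:ℝ) ≤ 1+s)]
      have h5 : 2*T*(1 - (1-γ)*s) < γ * t^(γ-1) := by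
        calc 2*T*(1-(1-γ)*s) < 2*T*((1+s)^(-(1-γ))) :=
              mul_lt_mul_of_pos_left hbern (by positivity)
          _ = γ * t^(γ-1) := by
              rw [show -(1-γ) = γ-1 by ring, hpow, ← mul_assoc, ← hK]
      have hTs : T * s = t - T := by rw [hsdef]; field_simp
      have h6 : 2*T*(1-(1-γ)*s) = 2*(2-γ)*T - 2*(1-γ)*t := by
        linear_combination (2*γ-2) * hTs
      have h7 : 1 - γ ≤ T * (2-γ) := (div_le_iff₀ h2γ).mp hT
      linarith
    have hD : ∀ x : ℝ, -1 < x →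
        HasDerivAt (fun x : ℝ => (1-γ)*x^2 + (1+x)^γ)
          (γ*(1+x)^(γ-1) + 2*(1-γ)*((1+x)-1)) x := by
      intro x hx
      have h1 : HasDerivAt (fun y:ℝ => 1+y) 1 x := (hasDerivAt_id x).const_add 1
      have h2 : HasDerivAt (fun y:ℝ => y^γ) (γ*(1+x)^(γ-1)) (1+x) :=
        Real.hasDerivAt_rpow_const (Or.inl (by linarith))
      have h3 : HasDerivAt (fun y:ℝ => (1+y)^γ) (γ*(1+x)^(γ-1) * 1) x := h2.comp x h1
      have h4 : HasDerivAt (fun y:ℝ => (1-γ)*y^2) ((1-γ)*(2*x)) x := by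
        simpa using (hasDerivAt_pow 2 x).const_mul (1-γ)
      rw [show γ*(1+x)^(γ-1) + 2*(1-γ)*((1+x)-1) = (1-γ)*(2*x) + γ*(1+x)^(γ-1)*1 by ring]
      exact h4.add h3
    set g : ℝ → ℝ := fun x : ℝ => (1-γ)*x^2 + (1+x)^γ with hgdef
    set x₀ : ℝ := T - 1 with hx₀def
    have hx₀ : -1 < x₀ := by rw [hx₀def]; linarith
    have S1 : StrictMonoOn g (Set.Ioc (-1) x₀) := by
      apply strictMonoOn_of_deriv_pos (convex_Ioc _ _)
      · intro x hx; exact (hD x hx.1).continuousAt.continuousWithinAt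
      · intro x hx
        rw [interior_Ioc] at hx
        rw [(hD x hx.1).deriv]
        have hne : (1:ℝ)+x ≠ T := by
          intro h; rw [hx₀def] at hx; have := hx.2; rw [← h] at this; linarith
        have := hkey (1+x) (by linarith [hx.1]) hne
        linarith
    have S2 : StrictMonoOn g (Set.Ici x₀) := by
      apply strictMonoOn_of_deriv_pos (convex_Ici _)
      · intro x hx
        have : -1 < x := lt_of_lt_of_le hx₀ hx
        exact (hD x this).continuousAt.continuousWithinAt
      · intro x hx
        rw [interior_Ici] at hx
        have hxgt : -1 < x := lt_trans hx₀ hx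
        rw [(hD x hxgt).deriv]
        have hne : (1:ℝ)+x ≠ T := by
          intro hEq
          have hx' : T - 1 < x := by simpa [hx₀def] using hx
          linarith
        have := hkey (1+x) (by linarith) hne
        linarith
    intro a ha b hb hab
    simp only [Set.mem_Ioi] at ha hb
    rcases le_or_gt b x₀ with h | h
    · exact S1 ⟨ha, by linarith⟩ ⟨hb, h⟩ hab
    · rcases le_or_gt x₀ a with h' | h'
      · exact S2 h' h.le hab
      · calc g a < g x₀ := S1 ⟨ha, h'.le⟩ ⟨hx₀, le_refl _⟩ h'
          _ < g b := S2 (Set.mem_Ici.mpr (le_refl x₀)) h.le h
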